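/- Let Ψ be a closed subroot system of the untwisted affine root system Φ such that Gr(Ψ) is irreducible. Then the difference set {r − r′ : r, r′ ∈ Z_α(Ψ)} is the same for all α ∈ Gr(Ψ); that is, {r − r′ : r, r′ ∈ Z_α(Ψ)} = {r − r′ : r, r′ ∈ Z_β(Ψ)} for all α, β ∈ Gr(Ψ). -/

import Mathlib

noncomputable section

variable {V : Type*} [NormedAddCommGroup V] [InnerProductSpace ℝ V]

/-- The Cartan pairing `⟨β, α∨⟩ = 2(β,α)/(α,α)`. -/
def cartanPair (α β : V) : ℝ := 2 * (inner ℝ β α : ℝ) / (inner ℝ α α : ℝ)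

/-- The reflection `s_α` on `V`: `s_α(β) = β - ⟨β,α∨⟩ α`. -/
def reflV (α β : V) : V := β - cartanPair α β • α

/-- The affine reflection `s_x` on `V × ℝ` with respect to the bilinear form
`B((x,a),(y,b)) = (x,y)`. -/
def reflA (x y : V × ℝ) : V × ℝ :=
  y - (2 * (inner ℝ y.1 x.1 : ℝ) / (inner ℝ x.1 x.1 : ℝ)) • x

/-- A finite irreducible reduced crystallographic root system in `V`. -/
structure IsIrreducibleRootSystem (R : Set V) : Prop where
  finite : R.Finite
  spans : Submodule.span ℝ R = ⊤
  zero_notMem : (0 : V) ∉ R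
  reduced : ∀ α ∈ R, ∀ c : ℝ, c • α ∈ R → c = 1 ∨ c = -1
  cartan_int : ∀ α ∈ R, ∀ β ∈ R, ∃ n : ℤ, cartanPair α β = (n : ℝ)
  refl_mem : ∀ α ∈ R, ∀ β ∈ R, reflV α β ∈ R
  irred : ∀ A B : Set V, R = A ∪ B → A.Nonempty → B.Nonempty →
    ∃ a ∈ A, ∃ b ∈ B, (inner ℝ a b : ℝ) ≠ 0

/-- A subroot system of a set `Φ` of affine roots: a nonempty proper subset stable
under the reflections `s_x`, `x ∈ Ψ`. -/
def IsSubrootSystem (Φ Ψ : Set (V × ℝ)) : Prop :=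
  Ψ.Nonempty ∧ Ψ ⊆ Φ ∧ Ψ ≠ Φ ∧ ∀ x ∈ Ψ, ∀ y ∈ Ψ, reflA x y ∈ Ψ

/-- `Ψ` is closed in `Φ`. -/
def IsClosedIn (Φ Ψ : Set (V × ℝ)) : Prop := ∀ x ∈ Ψ, ∀ y ∈ Ψ, x + y ∈ Φ → x + y ∈ Ψ

def IsClosedSubrootSystem (Φ Ψ : Set (V × ℝ)) : Prop :=
  IsSubrootSystem Φ Ψ ∧ IsClosedIn Φ Ψ

/-- A maximal closed subroot system of `Φ`: any closed subroot system of `Φ`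
containing it equals it. -/
def IsMaximalClosedSubrootSystem (Φ Ψ : Set (V × ℝ)) : Prop :=
  IsClosedSubrootSystem Φ Ψ ∧ ∀ Δ, IsClosedSubrootSystem Φ Δ → Ψ ⊆ Δ → Δ = Ψ

/-- A subroot system of a finite root system `R`. -/
def IsSubrootSystemF (R S : Set V) : Prop :=
  S.Nonempty ∧ S ⊆ R ∧ S ≠ R ∧ ∀ α ∈ S, ∀ β ∈ S, reflV α β ∈ S

/-- `S` is closed in the finite root system `R`. -/
def IsClosedInF (R S : Set V) : Prop := ∀ α ∈ S, ∀ β ∈ S, α + β ∈ R → α + β ∈ S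

def IsMaximalClosedSubrootSystemF (R S : Set V) : Prop :=
  (IsSubrootSystemF R S ∧ IsClosedInF R S) ∧
    ∀ T, IsSubrootSystemF R T → IsClosedInF R T → S ⊆ T → T = S

/-- A `ℤ`-linear function on `S`: the restriction to `S` of an additive group
homomorphism from the subgroup of `V` generated by `S` to `ℤ`. -/
def IsZLinearOn (S : Set V) (p : V → ℤ) : Prop :=
  ∃ f : AddSubgroup.closure S →+ ℤ,
    ∀ α, ∀ h : α ∈ S, p α = f ⟨α, AddSubgroup.subset_closure h⟩

/-- An irreducible subset: nonempty and not a union of two nonempty mutually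
orthogonal subsets. -/
def IsIrreducibleSubset (S : Set V) : Prop :=
  S.Nonempty ∧ ∀ A B : Set V, S = A ∪ B → A.Nonempty → B.Nonempty →
    ∃ a ∈ A, ∃ b ∈ B, (inner ℝ a b : ℝ) ≠ 0

/-- The untwisted affine root system attached to `R`. -/
def affineRS (R : Set V) : Set (V × ℝ) := {x | x.1 ∈ R ∧ ∃ r : ℤ, x.2 = (r : ℝ)}

/-- The gradient of a set of affine roots. -/
def Gr (Ψ : Set (V × ℝ)) : Set V := {α | ∃ r : ℤ, (α, (r : ℝ)) ∈ Ψ}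

/-- `Z_α(Ψ) = {r ∈ ℤ : α + rδ ∈ Ψ}`. -/
def ZSet (Ψ : Set (V × ℝ)) (α : V) : Set ℤ := {r | (α, (r : ℝ)) ∈ Ψ}

/-- The difference set `{r - r' : r, r' ∈ Z_α(Ψ)}`. -/
def DiffSet (Ψ : Set (V × ℝ)) (α : V) : Set ℤ :=
  {d | ∃ r ∈ ZSet Ψ α, ∃ r' ∈ ZSet Ψ α, d = r - r'}

/-- The lift `Ŝ = {α + rδ : α ∈ S, r ∈ ℤ}` of a subset `S` of the finite root system. -/
def liftF (S : Set V) : Set (V × ℝ) := {x | x.1 ∈ S ∧ ∃ r : ℤ, x.2 = (r : ℝ)}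

section Aux

open RealInnerProductSpace

variable {V : Type*} [NormedAddCommGroup V] [InnerProductSpace ℝ V]
variable {R : Set V} {Ψ : Set (V × ℝ)}

lemma mem_R_of_gr (hΨ : IsClosedSubrootSystem (affineRS R) Ψ) {α : V}
    (hα : α ∈ Gr Ψ) : α ∈ R := by
  obtain ⟨r, hr⟩ := hα
  exact (hΨ.1.2.1 hr).1

lemma inner_self_ne (hR : IsIrreducibleRootSystem R) {α : V} (hα : α ∈ R) :
    (inner ℝ α α : ℝ) ≠ 0 := by
  intro h
  rw [inner_self_eq_zero] at h
  exact hR.zero_notMem (h ▸ hα)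

lemma inner_self_pos' (hR : IsIrreducibleRootSystem R) {α : V} (hα : α ∈ R) :
    (0 : ℝ) < inner ℝ α α := by
  rcases (real_inner_self_nonneg (x := α)).lt_or_eq with h | h
  · exact h
  · exact absurd h.symm (inner_self_ne hR hα)

lemma reflA_pair (γ μ : V) (r s : ℝ) :
    reflA (γ, r) (μ, s) = (reflV γ μ, s - cartanPair γ μ * r) := by
  simp only [reflA, reflV, cartanPair, Prod.smul_mk, Prod.mk_sub_mk, smul_eq_mul]

lemma zset_refl (hR : IsIrreducibleRootSystem R)
    (hΨ : IsClosedSubrootSystem (affineRS R) Ψ) {γ μ : V} {r s : ℤ}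
    (hr : (γ, (r : ℝ)) ∈ Ψ) (hs : (μ, (s : ℝ)) ∈ Ψ) {n : ℤ}
    (hn : cartanPair γ μ = (n : ℝ)) :
    (reflV γ μ, ((s - n * r : ℤ) : ℝ)) ∈ Ψ := by
  have h := hΨ.1.2.2.2 (γ, (r : ℝ)) hr (μ, (s : ℝ)) hs
  rw [reflA_pair] at h
  rw [hn] at h
  have : ((s - n * r : ℤ) : ℝ) = (s : ℝ) - (n : ℝ) * (r : ℝ) := by push_cast; ring
  rw [this]
  exact h

lemma gr_refl (hR : IsIrreducibleRootSystem R)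
    (hΨ : IsClosedSubrootSystem (affineRS R) Ψ) {γ μ : V}
    (hγ : γ ∈ Gr Ψ) (hμ : μ ∈ Gr Ψ) : reflV γ μ ∈ Gr Ψ := by
  obtain ⟨r, hr⟩ := hγ
  obtain ⟨s, hs⟩ := hμ
  obtain ⟨n, hn⟩ := hR.cartan_int γ (mem_R_of_gr hΨ ⟨r, hr⟩) μ (mem_R_of_gr hΨ ⟨s, hs⟩)
  exact ⟨s - n * r, zset_refl hR hΨ hr hs hn⟩

lemma diff_subset_refl (hR : IsIrreducibleRootSystem R)
    (hΨ : IsClosedSubrootSystem (affineRS R) Ψ) {γ μ : V}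
    (hγ : γ ∈ Gr Ψ) (hμ : μ ∈ Gr Ψ) :
    DiffSet Ψ μ ⊆ DiffSet Ψ (reflV γ μ) := by
  obtain ⟨r, hr⟩ := hγ
  have hγR : γ ∈ R := mem_R_of_gr hΨ ⟨r, hr⟩
  have hμR : μ ∈ R := mem_R_of_gr hΨ hμ
  obtain ⟨n, hn⟩ := hR.cartan_int γ hγR μ hμR
  rintro d ⟨s, hs, s', hs', rfl⟩
  exact ⟨s - n * r, zset_refl hR hΨ hr hs hn,
    s' - n * r, zset_refl hR hΨ hr hs' hn, by ring⟩

lemma reflV_reflV (hR : IsIrreducibleRootSystem R) {γ : V} (hγ : γ ∈ R) (μ : V) :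
    reflV γ (reflV γ μ) = μ := by
  have h0 : (inner ℝ γ γ : ℝ) ≠ 0 := inner_self_ne hR hγ
  have hc : cartanPair γ (reflV γ μ) = - cartanPair γ μ := by
    simp only [cartanPair, reflV, cartanPair, inner_sub_left, real_inner_smul_left]
    field_simp
    ring
  rw [reflV, hc, reflV]
  module

lemma diff_eq_refl (hR : IsIrreducibleRootSystem R)
    (hΨ : IsClosedSubrootSystem (affineRS R) Ψ) {γ μ : V}
    (hγ : γ ∈ Gr Ψ) (hμ : μ ∈ Gr Ψ) :
    DiffSet Ψ (reflV γ μ) = DiffSet Ψ μ := by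
  apply Set.Subset.antisymm
  · have h := diff_subset_refl hR hΨ hγ (gr_refl hR hΨ hγ hμ)
    rwa [reflV_reflV hR (mem_R_of_gr hΨ hγ) μ] at h
  · exact diff_subset_refl hR hΨ hγ hμ

lemma reflV_self (hR : IsIrreducibleRootSystem R) {μ : V} (hμ : μ ∈ R) :
    reflV μ μ = -μ := by
  have h0 : (inner ℝ μ μ : ℝ) ≠ 0 := inner_self_ne hR hμ
  have hc : cartanPair μ μ = 2 := by
    simp only [cartanPair]
    field_simp
  rw [reflV, hc]
  module

lemma gr_neg (hR : IsIrreducibleRootSystem R)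
    (hΨ : IsClosedSubrootSystem (affineRS R) Ψ) {μ : V} (hμ : μ ∈ Gr Ψ) :
    -μ ∈ Gr Ψ := by
  have h := gr_refl hR hΨ hμ hμ
  rwa [reflV_self hR (mem_R_of_gr hΨ hμ)] at h

lemma diff_neg (hR : IsIrreducibleRootSystem R)
    (hΨ : IsClosedSubrootSystem (affineRS R) Ψ) {μ : V} (hμ : μ ∈ Gr Ψ) :
    DiffSet Ψ (-μ) = DiffSet Ψ μ := by
  have h := diff_eq_refl hR hΨ hμ hμ
  rwa [reflV_self hR (mem_R_of_gr hΨ hμ)] at h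

lemma diff_subset_add (hΨ : IsClosedSubrootSystem (affineRS R) Ψ) {α β : V}
    (hα : α ∈ Gr Ψ) (hβ : β ∈ Gr Ψ) (hsum : α + β ∈ R) :
    DiffSet Ψ α ⊆ DiffSet Ψ (α + β) := by
  obtain ⟨s, hs⟩ := hβ
  rintro d ⟨r, hr, r', hr', rfl⟩
  have key : ∀ t : ℤ, t ∈ ZSet Ψ α → (t + s) ∈ ZSet Ψ (α + β) := by
    intro t ht
    have h := hΨ.2 (α, (t : ℝ)) ht (β, (s : ℝ)) hs ⟨hsum, ⟨t + s, by simp [Prod.snd_add]⟩⟩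
    have he : (α, (t : ℝ)) + (β, (s : ℝ)) = (α + β, ((t + s : ℤ) : ℝ)) := by
      have hcast : ((t : ℝ)) + (s : ℝ) = ((t + s : ℤ) : ℝ) := by push_cast; ring
      rw [Prod.mk_add_mk, hcast]
    rwa [he] at h
  exact ⟨r + s, key r hr, r' + s, key r' hr', by ring⟩

lemma lemA (hR : IsIrreducibleRootSystem R)
    (hΨ : IsClosedSubrootSystem (affineRS R) Ψ) {α β : V}
    (hα : α ∈ Gr Ψ) (hβ : β ∈ Gr Ψ) (hc : cartanPair β α = -1) :
    DiffSet Ψ β ⊆ DiffSet Ψ α := by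
  have hαR : α ∈ R := mem_R_of_gr hΨ hα
  have hβR : β ∈ R := mem_R_of_gr hΨ hβ
  have heq : reflV β α = β + α := by rw [reflV, hc]; module
  have hsumR : β + α ∈ R := heq ▸ hR.refl_mem β hβR α hαR
  have h1 : DiffSet Ψ β ⊆ DiffSet Ψ (β + α) := diff_subset_add hΨ hβ hα hsumR
  have h2 : DiffSet Ψ (β + α) = DiffSet Ψ α := by
    rw [← heq]; exact diff_eq_refl hR hΨ hβ hα
  rw [← h2]; exact h1

lemma lemB2 (hR : IsIrreducibleRootSystem R)
    (hΨ : IsClosedSubrootSystem (affineRS R) Ψ) {α β : V}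
    (hα : α ∈ Gr Ψ) (hβ : β ∈ Gr Ψ)
    (hc : cartanPair α β = -1) (hc' : cartanPair β α = -2) :
    DiffSet Ψ β ⊆ DiffSet Ψ α := by
  have hαR : α ∈ R := mem_R_of_gr hΨ hα
  have hβR : β ∈ R := mem_R_of_gr hΨ hβ
  -- γ = α + β ∈ Gr Ψ
  have hγeq : reflV α β = β + α := by rw [reflV, hc]; module
  have hγGr : β + α ∈ Gr Ψ := hγeq ▸ gr_refl hR hΨ hα hβ
  -- reflV β α = α + 2β ∈ R
  have hδeq : reflV β α = β + (β + α) := by rw [reflV, hc']; module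
  have hδR : β + (β + α) ∈ R := hδeq ▸ hR.refl_mem β hβR α hαR
  have h1 : DiffSet Ψ β ⊆ DiffSet Ψ (β + (β + α)) := diff_subset_add hΨ hβ hγGr hδR
  have h2 : DiffSet Ψ (β + (β + α)) = DiffSet Ψ α := by
    rw [← hδeq]; exact diff_eq_refl hR hΨ hβ hα
  rw [← h2]; exact h1

lemma lemG2 (hR : IsIrreducibleRootSystem R)
    (hΨ : IsClosedSubrootSystem (affineRS R) Ψ) {α β : V}
    (hα : α ∈ Gr Ψ) (hβ : β ∈ Gr Ψ)
    (hc : cartanPair α β = -1) (hc' : cartanPair β α = -3) :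
    DiffSet Ψ β ⊆ DiffSet Ψ α := by
  have hαR : α ∈ R := mem_R_of_gr hΨ hα
  have hβR : β ∈ R := mem_R_of_gr hΨ hβ
  have ha0 : (inner ℝ α α : ℝ) ≠ 0 := inner_self_ne hR hαR
  have hb0 : (inner ℝ β β : ℝ) ≠ 0 := inner_self_ne hR hβR
  have hp1 : 2 * (inner ℝ β α : ℝ) = - (inner ℝ α α : ℝ) := by
    have := hc; rw [cartanPair, div_eq_iff ha0] at this; linarith
  have hp2 : 2 * (inner ℝ α β : ℝ) = - 3 * (inner ℝ β β : ℝ) := by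
    have := hc'; rw [cartanPair, div_eq_iff hb0] at this; linarith
  have hsym : (inner ℝ α β : ℝ) = (inner ℝ β α : ℝ) := real_inner_comm β α
  -- γ = β + α ∈ Gr Ψ
  have hγeq : reflV α β = β + α := by rw [reflV, hc]; module
  have hγGr : β + α ∈ Gr Ψ := hγeq ▸ gr_refl hR hΨ hα hβ
  -- cartanPair (β+α) β = -1
  have hcγ : cartanPair (β + α) β = -1 := by
    rw [cartanPair]
    have e1 : (inner ℝ β (β + α) : ℝ) = (inner ℝ β β : ℝ) + (inner ℝ β α : ℝ) := by
      rw [inner_add_right]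
    have e2 : (inner ℝ (β + α) (β + α) : ℝ)
        = (inner ℝ β β : ℝ) + (inner ℝ β α : ℝ) + ((inner ℝ α β : ℝ) + (inner ℝ α α : ℝ)) := by
      simp only [inner_add_left, inner_add_right]
      linarith [hsym]
    rw [e1, e2]
    have hd0 : (inner ℝ β β : ℝ) + (inner ℝ β α : ℝ) + ((inner ℝ α β : ℝ) + (inner ℝ α α : ℝ)) ≠ 0 := by
      intro h; apply hb0; linarith
    rw [div_eq_iff hd0]
    linarith
  -- δ = β + (β + α) ∈ Gr Ψ
  have hδeq : reflV (β + α) β = β + (β + α) := by rw [reflV, hcγ]; module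
  have hδGr : β + (β + α) ∈ Gr Ψ := hδeq ▸ gr_refl hR hΨ hγGr hβ
  -- reflV β α = α + 3β ∈ R
  have hεeq : reflV β α = β + (β + (β + α)) := by rw [reflV, hc']; module
  have hεR : β + (β + (β + α)) ∈ R := hεeq ▸ hR.refl_mem β hβR α hαR
  have h1 : DiffSet Ψ β ⊆ DiffSet Ψ (β + (β + (β + α))) := diff_subset_add hΨ hβ hδGr hεR
  have h2 : DiffSet Ψ (β + (β + (β + α))) = DiffSet Ψ α := by
    rw [← hεeq]; exact diff_eq_refl hR hΨ hβ hα
  rw [← h2]; exact h1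

lemma oneDir (hR : IsIrreducibleRootSystem R)
    (hΨ : IsClosedSubrootSystem (affineRS R) Ψ) {α β : V}
    (hα : α ∈ Gr Ψ) (hβ : β ∈ Gr Ψ) (hneg : (inner ℝ α β : ℝ) < 0)
    (hne : α + β ≠ 0) :
    DiffSet Ψ β ⊆ DiffSet Ψ α := by
  have hαR : α ∈ R := mem_R_of_gr hΨ hα
  have hβR : β ∈ R := mem_R_of_gr hΨ hβ
  have ha2 : (0 : ℝ) < inner ℝ α α := inner_self_pos' hR hαR
  have hb2 : (0 : ℝ) < inner ℝ β β := inner_self_pos' hR hβR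
  have hsym : (inner ℝ β α : ℝ) = (inner ℝ α β : ℝ) := real_inner_comm α β
  obtain ⟨m, hm⟩ := hR.cartan_int α hαR β hβR
  obtain ⟨m', hm'⟩ := hR.cartan_int β hβR α hαR
  have hmval : 2 * (inner ℝ α β : ℝ) = (m : ℝ) * (inner ℝ α α : ℝ) := by
    have := hm; rw [cartanPair, div_eq_iff (ne_of_gt ha2)] at this
    rw [hsym] at this; linarith
  have hm'val : 2 * (inner ℝ α β : ℝ) = (m' : ℝ) * (inner ℝ β β : ℝ) := by
    have := hm'; rw [cartanPair, div_eq_iff (ne_of_gt hb2)] at this; linarith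
  have hmneg : m ≤ -1 := by
    by_contra h
    push_neg at h
    have h0 : (0 : ℝ) ≤ (m : ℝ) := by exact_mod_cast by omega
    nlinarith [mul_nonneg h0 (le_of_lt ha2)]
  have hm'neg : m' ≤ -1 := by
    by_contra h
    push_neg at h
    have h0 : (0 : ℝ) ≤ (m' : ℝ) := by exact_mod_cast by omega
    nlinarith [mul_nonneg h0 (le_of_lt hb2)]
  have hCS : (inner ℝ α β : ℝ) * (inner ℝ α β : ℝ) ≤ (inner ℝ α α : ℝ) * (inner ℝ β β : ℝ) :=
    real_inner_mul_inner_self_le α β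
  have hprod : m * m' ≤ 4 := by
    have key : ((m : ℝ) * (inner ℝ α α : ℝ)) * ((m' : ℝ) * (inner ℝ β β : ℝ))
        = (2 * (inner ℝ α β : ℝ)) * (2 * (inner ℝ α β : ℝ)) := by
      rw [← hmval, ← hm'val]
    have h4 : ((m * m' : ℤ) : ℝ) ≤ 4 := by
      push_cast
      nlinarith [key, hCS, mul_pos ha2 hb2]
    exact_mod_cast h4
  -- rule out the m * m' = 4 cases
  have hnot22 : ¬ (m = -2 ∧ m' = -2) := by
    rintro ⟨rfl, rfl⟩
    apply hne
    rw [← inner_self_eq_zero (𝕜 := ℝ)]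
    have h1 : (inner ℝ (α + β) (α + β) : ℝ)
        = (inner ℝ α α : ℝ) + 2 * (inner ℝ α β : ℝ) + (inner ℝ β β : ℝ) := by
      rw [inner_add_left, inner_add_right, inner_add_right, hsym]; ring
    rw [h1]
    push_cast at hmval hm'val
    linarith
  have hnot14 : ¬ (m = -1 ∧ m' = -4) := by
    rintro ⟨rfl, rfl⟩
    have h0 : α + (2 : ℝ) • β = 0 := by
      rw [← inner_self_eq_zero (𝕜 := ℝ)]
      have h1 : (inner ℝ (α + (2:ℝ) • β) (α + (2:ℝ) • β) : ℝ)
          = (inner ℝ α α : ℝ) + 4 * (inner ℝ α β : ℝ) + 4 * (inner ℝ β β : ℝ) := by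
        rw [inner_add_left, inner_add_right, inner_add_right,
          real_inner_smul_left, real_inner_smul_left, real_inner_smul_right,
          real_inner_smul_right, hsym]
        ring
      rw [h1]
      push_cast at hmval hm'val
      linarith
    have hαval : α = (-2 : ℝ) • β := by
      have := h0
      rw [add_eq_zero_iff_eq_neg] at this
      rw [this]; module
    have := hR.reduced β hβR (-2) (by rw [← hαval]; exact hαR)
    rcases this with h | h <;> norm_num at h
  have hnot41 : ¬ (m = -4 ∧ m' = -1) := by
    rintro ⟨rfl, rfl⟩
    have h0 : β + (2 : ℝ) • α = 0 := by
      rw [← inner_self_eq_zero (𝕜 := ℝ)]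
      have h1 : (inner ℝ (β + (2:ℝ) • α) (β + (2:ℝ) • α) : ℝ)
          = (inner ℝ β β : ℝ) + 4 * (inner ℝ α β : ℝ) + 4 * (inner ℝ α α : ℝ) := by
        rw [inner_add_left, inner_add_right, inner_add_right,
          real_inner_smul_left, real_inner_smul_left, real_inner_smul_right,
          real_inner_smul_right, hsym]
        ring
      rw [h1]
      push_cast at hmval hm'val
      linarith
    have hβval : β = (-2 : ℝ) • α := by
      have := h0
      rw [add_eq_zero_iff_eq_neg] at this
      rw [this]; module
    have := hR.reduced α hαR (-2) (by rw [← hβval]; exact hβR)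
    rcases this with h | h <;> norm_num at h
  -- case split
  have hcases : m' = -1 ∨ (m = -1 ∧ m' = -2) ∨ (m = -1 ∧ m' = -3) := by
    have hm4 : -4 ≤ m := by nlinarith
    have hm'4 : -4 ≤ m' := by nlinarith
    interval_cases m <;> interval_cases m' <;> omega
  rcases hcases with h | ⟨h1, h2⟩ | ⟨h1, h2⟩
  · exact lemA hR hΨ hα hβ (by rw [hm', h]; norm_num)
  · exact lemB2 hR hΨ hα hβ (by rw [hm, h1]; norm_num) (by rw [hm', h2]; norm_num)
  · exact lemG2 hR hΨ hα hβ (by rw [hm, h1]; norm_num) (by rw [hm', h2]; norm_num)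

lemma mainSymNeg (hR : IsIrreducibleRootSystem R)
    (hΨ : IsClosedSubrootSystem (affineRS R) Ψ) {α β : V}
    (hα : α ∈ Gr Ψ) (hβ : β ∈ Gr Ψ) (hlt : (inner ℝ α β : ℝ) < 0) :
    DiffSet Ψ α = DiffSet Ψ β := by
  by_cases hsum : α + β = 0
  · have : β = -α := by rw [eq_neg_of_add_eq_zero_right hsum]
    rw [this, diff_neg hR hΨ hα]
  · apply Set.Subset.antisymm
    · exact oneDir hR hΨ hβ hα (by rw [real_inner_comm]; exact hlt)
        (by rw [add_comm]; exact hsum)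
    · exact oneDir hR hΨ hα hβ hlt hsum

lemma mainSym (hR : IsIrreducibleRootSystem R)
    (hΨ : IsClosedSubrootSystem (affineRS R) Ψ) {α β : V}
    (hα : α ∈ Gr Ψ) (hβ : β ∈ Gr Ψ) (hp : (inner ℝ α β : ℝ) ≠ 0) :
    DiffSet Ψ α = DiffSet Ψ β := by
  rcases lt_or_gt_of_ne hp with hlt | hgt
  · exact mainSymNeg hR hΨ hα hβ hlt
  · have hβ' : -β ∈ Gr Ψ := gr_neg hR hΨ hβ
    have hlt' : (inner ℝ α (-β) : ℝ) < 0 := by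
      rw [inner_neg_right]; linarith
    rw [mainSymNeg hR hΨ hα hβ' hlt', diff_neg hR hΨ hβ]

end Aux

/-- For a closed subroot system `Ψ` of the untwisted affine root
system with irreducible gradient, the difference sets of the `Z_α(Ψ)` all agree. -/
theorem statement1
    {V : Type*} [NormedAddCommGroup V] [InnerProductSpace ℝ V] [FiniteDimensional ℝ V]
    (R : Set V) (hR : IsIrreducibleRootSystem R)
    (Ψ : Set (V × ℝ)) (hΨ : IsClosedSubrootSystem (affineRS R) Ψ)
    (hirr : IsIrreducibleSubset (Gr Ψ)) :
    ∀ α ∈ Gr Ψ, ∀ β ∈ Gr Ψ, DiffSet Ψ α = DiffSet Ψ β := by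
  intro α hα β hβ
  by_contra hne
  set A : Set V := {γ | γ ∈ Gr Ψ ∧ DiffSet Ψ γ = DiffSet Ψ α} with hA
  set B : Set V := {γ | γ ∈ Gr Ψ ∧ DiffSet Ψ γ ≠ DiffSet Ψ α} with hB
  have hunion : Gr Ψ = A ∪ B := by
    ext γ
    simp only [hA, hB, Set.mem_union, Set.mem_setOf_eq]
    constructor
    · intro h; by_cases hd : DiffSet Ψ γ = DiffSet Ψ α
      · exact Or.inl ⟨h, hd⟩
      · exact Or.inr ⟨h, hd⟩
    · rintro (⟨h, _⟩ | ⟨h, _⟩) <;> exact h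
  have hAne : A.Nonempty := ⟨α, hα, rfl⟩
  have hBne : B.Nonempty := ⟨β, hβ, fun h => hne h.symm⟩
  obtain ⟨a, ha, b, hb, hab⟩ := hirr.2 A B hunion hAne hBne
  have hDab : DiffSet Ψ a = DiffSet Ψ b := mainSym hR hΨ ha.1 hb.1 hab
  exact hb.2 (hDab ▸ ha.2)
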